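/- Let n ∈ ℕ and let A ⊆ ℝ^{2n} be countably n-rectifiable and n-negligible. Then there exists a vector v₀ ∈ ℝ^{2n} such that for Lebesgue-almost every t ∈ ℝ one has (A + t·v₀) ∩ A = ∅. -/

import Mathlib

open Set MeasureTheory Module Metric Filter
open scoped NNReal ENNReal Pointwise

/-- A subset `A` of a metric space is countably `m`-rectifiable iff it is the union of the
images of countably many Lipschitz maps, each defined on some subset of `ℝ^m`. -/
def CountablyRectifiable (m : ℕ) {X : Type*} [MetricSpace X] (A : Set X) : Prop :=
  ∃ (S : ℕ → Set (EuclideanSpace ℝ (Fin m))) (f : ∀ i, S i → X) (C : ℕ → NNReal),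
    (∀ i, LipschitzWith (C i) (f i)) ∧ A = ⋃ i, Set.range (f i)

noncomputable section DisplaceabilityAux

local notation "Eu" m => EuclideanSpace ℝ (Fin m)

/-- Two additive Haar measures on a finite-dimensional real normed space have the same
null sets. -/
theorem DisplaceAux.haar_null_of_haar_null {X : Type*} [NormedAddCommGroup X] [NormedSpace ℝ X]
    [FiniteDimensional ℝ X] [MeasurableSpace X] [BorelSpace X]
    (μ ν : Measure X) [μ.IsAddHaarMeasure] [ν.IsAddHaarMeasure]
    {s : Set X} (hs : ν s = 0) : μ s = 0 := by
  rw [Measure.isAddLeftInvariant_eq_smul μ ν]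
  simp [hs]

/-- The image of a null set under a Lipschitz map between finite-dimensional normed spaces of
the same dimension is null, for any pair of Haar measures. -/
theorem DisplaceAux.lipschitz_image_null {X Y : Type*} [NormedAddCommGroup X] [NormedSpace ℝ X]
    [FiniteDimensional ℝ X] [MeasurableSpace X] [BorelSpace X]
    [NormedAddCommGroup Y] [NormedSpace ℝ Y] [FiniteDimensional ℝ Y]
    [MeasurableSpace Y] [BorelSpace Y]
    (μ : Measure X) (ν : Measure Y) [μ.IsAddHaarMeasure] [ν.IsAddHaarMeasure]
    (hd : finrank ℝ X = finrank ℝ Y) {K : ℝ≥0} {φ : X → Y}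
    (hφ : LipschitzWith K φ) {s : Set X} (hs : μ s = 0) : ν (φ '' s) = 0 := by
  haveI := isAddHaarMeasure_hausdorffMeasure (E := X)
  haveI := isAddHaarMeasure_hausdorffMeasure (E := Y)
  have h1 : μH[(finrank ℝ X : ℝ)] s = 0 :=
    DisplaceAux.haar_null_of_haar_null μH[(finrank ℝ X : ℝ)] μ hs
  have h2 : μH[(finrank ℝ Y : ℝ)] (φ '' s) = 0 := by
    have := hφ.hausdorffMeasure_image_le (d := (finrank ℝ X : ℝ)) (by positivity) s
    rw [h1, mul_zero] at this
    rw [← hd]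
    exact le_antisymm this zero_le
  exact DisplaceAux.haar_null_of_haar_null ν μH[(finrank ℝ Y : ℝ)] h2

/-- If `f` is anti-Lipschitz on `s` (with constant `K`), then the Hausdorff measure of `s`
is controlled by that of `f '' s`. Works for arbitrary (possibly nonmeasurable) `s`. -/
theorem DisplaceAux.hausdorff_le_of_antilip {X Y : Type*} [MetricSpace X] [MeasurableSpace X]
    [BorelSpace X] [MetricSpace Y] [MeasurableSpace Y] [BorelSpace Y]
    (f : X → Y) (s : Set X) (K : ℝ≥0)
    (hK : ∀ x ∈ s, ∀ y ∈ s, dist x y ≤ K * dist (f x) (f y))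
    {d : ℝ} (hd : 0 ≤ d) : μH[d] s ≤ (K : ℝ≥0∞) ^ d * μH[d] (f '' s) := by
  classical
  rcases s.eq_empty_or_nonempty with rfl | ⟨x₀, hx₀⟩
  · simp
  set g : Y → X := fun y => if h : ∃ x ∈ s, f x = y then h.choose else x₀ with hg
  have hginv : ∀ x ∈ s, g (f x) ∈ s ∧ f (g (f x)) = f x := by
    intro x hx
    have h : ∃ x' ∈ s, f x' = f x := ⟨x, hx, rfl⟩
    simp only [hg, dif_pos h]
    exact ⟨h.choose_spec.1, h.choose_spec.2⟩
  have hgx : ∀ x ∈ s, g (f x) = x := by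
    intro x hx
    obtain ⟨h1, h2⟩ := hginv x hx
    have h3 : dist (g (f x)) x ≤ K * dist (f (g (f x))) (f x) := hK _ h1 _ hx
    rw [h2, dist_self, mul_zero] at h3
    exact dist_le_zero.1 h3
  have himg : g '' (f '' s) = s := by
    apply subset_antisymm
    · rintro _ ⟨_, ⟨x, hx, rfl⟩, rfl⟩
      exact (hginv x hx).1
    · intro x hx
      exact ⟨f x, mem_image_of_mem f hx, hgx x hx⟩
  have hlip : LipschitzOnWith K g (f '' s) := by
    rw [lipschitzOnWith_iff_dist_le_mul]
    rintro _ ⟨x, hx, rfl⟩ _ ⟨y, hy, rfl⟩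
    rw [hgx x hx, hgx y hy]
    exact hK x hx y hy
  calc μH[d] s = μH[d] (g '' (f '' s)) := by rw [himg]
    _ ≤ (K : ℝ≥0∞) ^ d * μH[d] (f '' s) := hlip.hausdorffMeasure_image_le hd


namespace DisplaceAux
set_option maxHeartbeats 2000000

/-- On the part of `T` where `F` is differentiable with injective differential, if the image
`F '' T` is `H^n`-null then that part is Lebesgue-null. -/
theorem inj_part_null {n N : ℕ} (F : (Eu n) → (Eu N)) (T : Set (Eu n))
    (hT : μH[(n : ℝ)] (F '' T) = 0) :
    volume {x | x ∈ T ∧ DifferentiableAt ℝ F x ∧ Function.Injective (fderiv ℝ F x)} = 0 := by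
  classical
  set q : ℕ → ℝ := fun m => 1 / (m + 1) with hqdef
  have hq : ∀ m, 0 < q m := fun m => by positivity
  let As : ℕ → ((Eu n) →L[ℝ] (Eu N)) := TopologicalSpace.denseSeq _
  have hAs : DenseRange As := TopologicalSpace.denseRange_denseSeq _
  let bs : ℕ → (Eu n) := TopologicalSpace.denseSeq _
  have hbs : DenseRange bs := TopologicalSpace.denseRange_denseSeq _
  set Y : ℕ × ℕ × ℕ × ℕ → Set (Eu n) := fun p =>
    {x | (∀ v, 3 * q p.2.1 * ‖v‖ ≤ ‖As p.1 v‖) ∧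
      (∀ y, ‖y - x‖ ≤ q p.2.2.1 → ‖F y - F x - As p.1 (y - x)‖ ≤ q p.2.1 * ‖y - x‖) ∧
      dist x (bs p.2.2.2) ≤ q p.2.2.1 / 2} with hYdef
  -- each piece of the cover is H^n-null
  have piece : ∀ p, μH[(n : ℝ)] (Y p ∩ T) = 0 := by
    rintro ⟨i, m, k, j⟩
    set K : ℝ≥0 := ((2 * q m)⁻¹).toNNReal with hKdef
    have hanti : ∀ x ∈ Y (i, m, k, j) ∩ T, ∀ y ∈ Y (i, m, k, j) ∩ T,
        dist x y ≤ K * dist (F x) (F y) := by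
      rintro x ⟨⟨hx1, hx2, hx3⟩, -⟩ y ⟨⟨hy1, hy2, hy3⟩, -⟩
      have hxy : ‖y - x‖ ≤ q k := by
        have := dist_triangle x (bs j) y
        rw [dist_comm (bs j) y] at this
        have h1 : dist x y ≤ q k := by linarith
        rw [dist_eq_norm] at h1
        rw [← norm_neg]
        simpa [neg_sub] using h1
      have h2 := hx2 y hxy
      have h1 := hx1 (y - x)
      have h3 : ‖As i (y - x)‖ ≤ ‖F y - F x‖ + ‖F y - F x - As i (y - x)‖ := by
        have := norm_sub_le (F y - F x) (F y - F x - As i (y - x))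
        simpa using this
      have h4 : 2 * q m * ‖y - x‖ ≤ ‖F y - F x‖ := by nlinarith [norm_nonneg (y - x)]
      have hKcoe : (K : ℝ) = (2 * q m)⁻¹ := Real.coe_toNNReal _ (by positivity)
      rw [dist_eq_norm, dist_eq_norm, hKcoe]
      have h5 : ‖x - y‖ = ‖y - x‖ := norm_sub_rev x y
      have h6 : ‖F x - F y‖ = ‖F y - F x‖ := norm_sub_rev _ _
      rw [h5, h6]
      rw [inv_mul_eq_div, le_div_iff₀ (by positivity)]
      nlinarith [hq m]
    have := hausdorff_le_of_antilip F (Y (i, m, k, j) ∩ T) K hanti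
      (d := (n : ℝ)) (by positivity)
    have h0 : μH[(n : ℝ)] (F '' (Y (i, m, k, j) ∩ T)) = 0 :=
      le_antisymm (le_trans (measure_mono (image_mono inter_subset_right)) hT.le) zero_le
    rw [h0, mul_zero] at this
    exact le_antisymm this zero_le
  -- the set is covered by the pieces
  have cover : {x | x ∈ T ∧ DifferentiableAt ℝ F x ∧ Function.Injective (fderiv ℝ F x)} ⊆
      ⋃ p, (Y p ∩ T) := by
    rintro x ⟨hxT, hdiff, hinj⟩
    set L := fderiv ℝ F x with hL
    obtain ⟨K₀, K₀pos, hK₀⟩ := LinearMap.exists_antilipschitzWith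
      (L : (Eu n) →ₗ[ℝ] (Eu N)) (LinearMap.ker_eq_bot.mpr hinj)
    set c : ℝ := (K₀ : ℝ)⁻¹ with hc
    have hcpos : 0 < c := by positivity
    have hcL : ∀ v, c * ‖v‖ ≤ ‖L v‖ := by
      intro v
      have h := hK₀.le_mul_dist v 0
      simp only [dist_zero_right, ContinuousLinearMap.coe_coe, map_zero, dist_eq_norm,
        sub_zero] at h
      have hKpos : (0 : ℝ) < (K₀ : ℝ) := K₀pos
      have hinv : c * (K₀ : ℝ) = 1 := inv_mul_cancel₀ (ne_of_gt hKpos)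
      nlinarith [norm_nonneg (L v), norm_nonneg v]
    -- choose m with q m < c / 8
    obtain ⟨m', hm'⟩ := exists_nat_gt (8 / c)
    set m := m' with hm
    have hqm : q m < c / 8 := by
      have h1 : (8 : ℝ) / c < m + 1 := lt_trans hm' (by exact_mod_cast lt_add_one _)
      have h2 : (0 : ℝ) < 8 / c := by positivity
      rw [hqdef]
      simp only [one_div]
      rw [inv_lt_comm₀ (by positivity) (by positivity)]
      · convert h1 using 1
        · rfl
        · rw [inv_div]
    have hqm8 : 8 * q m < c := by
      have := hqm
      nlinarith [hq m]
    -- choose i with dist L (As i) < q m / 2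
    obtain ⟨i, hi⟩ := hAs.exists_dist_lt L (half_pos (hq m))
    have hopnorm : ∀ v, ‖(L - As i) v‖ ≤ q m / 2 * ‖v‖ := by
      intro v
      calc ‖(L - As i) v‖ ≤ ‖L - As i‖ * ‖v‖ := (L - As i).le_opNorm v
        _ ≤ q m / 2 * ‖v‖ := by
            apply mul_le_mul_of_nonneg_right _ (norm_nonneg v)
            rw [← dist_eq_norm]
            exact hi.le
    -- condition 1
    have cond1 : ∀ v, 3 * q m * ‖v‖ ≤ ‖As i v‖ := by
      intro v
      have h1 : ‖L v‖ - ‖(L - As i) v‖ ≤ ‖As i v‖ := by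
        have h := norm_sub_norm_le (L v) ((L - As i) v)
        have h2 : L v - (L - As i) v = As i v := by
          simp only [ContinuousLinearMap.sub_apply]
          abel
        rwa [h2] at h
      have h3 := hcL v
      have h4 := hopnorm v
      nlinarith [norm_nonneg v]
    -- condition 2 : find k
    have hlo := hasFDerivAt_iff_isLittleO_nhds_zero.mp hdiff.hasFDerivAt
    have hev := hlo.def (half_pos (hq m))
    rw [Metric.eventually_nhds_iff] at hev
    obtain ⟨ε, hε, hball⟩ := hev
    obtain ⟨k', hk'⟩ := exists_nat_gt (1 / ε)
    set k := k' with hk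
    have hqk : q k < ε := by
      have h1 : (1 : ℝ) / ε < k + 1 := lt_trans hk' (by exact_mod_cast lt_add_one _)
      rw [hqdef]
      simp only [one_div]
      rw [inv_lt_comm₀ (by positivity) hε]
      simpa [one_div] using h1
    have cond2 : ∀ y, ‖y - x‖ ≤ q k → ‖F y - F x - As i (y - x)‖ ≤ q m * ‖y - x‖ := by
      intro y hy
      have hyball : dist (y - x) 0 < ε := by
        rw [dist_zero_right]
        exact lt_of_le_of_lt hy hqk
      have h1' := hball hyball
      have hxyx : x + (y - x) = y := by abel
      rw [hxyx] at h1'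
      have h1 : ‖F y - F x - L (y - x)‖ ≤ q m / 2 * ‖y - x‖ := by
        simpa using h1' 
      have h2 : ‖F y - F x - As i (y - x)‖ ≤
          ‖F y - F x - L (y - x)‖ + ‖(L - As i) (y - x)‖ := by
        have h3 : F y - F x - As i (y - x) =
            (F y - F x - L (y - x)) + (L - As i) (y - x) := by
          simp only [ContinuousLinearMap.sub_apply]
          abel
        rw [h3]
        exact norm_add_le _ _
      have h4 := hopnorm (y - x)
      have h5 : ‖F y - F x - L (y - x)‖ ≤ q m / 2 * ‖y - x‖ := h1
      nlinarith [norm_nonneg (y - x)]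
    -- condition 3 : find j
    obtain ⟨j, hj⟩ := hbs.exists_dist_lt x (by positivity : (0:ℝ) < q k / 2)
    refine mem_iUnion.2 ⟨(i, m, k, j), ⟨⟨cond1, cond2, hj.le⟩, hxT⟩⟩
  -- conclude
  have hnullH : μH[(n : ℝ)] {x | x ∈ T ∧ DifferentiableAt ℝ F x ∧
      Function.Injective (fderiv ℝ F x)} = 0 :=
    measure_mono_null cover (measure_iUnion_null piece)
  haveI := isAddHaarMeasure_hausdorffMeasure (E := EuclideanSpace ℝ (Fin n))
  have hfr : μH[(finrank ℝ (EuclideanSpace ℝ (Fin n)) : ℝ)] {x | x ∈ T ∧ DifferentiableAt ℝ F x ∧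
      Function.Injective (fderiv ℝ F x)} = 0 := by
    rw [finrank_euclideanSpace_fin]
    exact hnullH
  exact haar_null_of_haar_null volume μH[(finrank ℝ (EuclideanSpace ℝ (Fin n)) : ℝ)] hfr

/-- dimension bookkeeping -/
theorem frk {n : ℕ} :
    finrank ℝ ((Eu n) × (Eu n)) = finrank ℝ (Eu (2 * n)) := by
  simp [finrank_euclideanSpace_fin, two_mul]

/-- The set of differences `G y - F x`, as `x` ranges over `T`, `y` over `U`, is Lebesgue-null,
provided `F '' T` is `H^n`-null. -/
theorem diff_image_null {n : ℕ} (F G : (Eu n) → (Eu (2 * n))) {CF CG : ℝ≥0}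
    (hF : LipschitzWith CF F) (hG : LipschitzWith CG G) (T U : Set (Eu n))
    (hT : μH[(n : ℝ)] (F '' T) = 0) :
    volume {z : Eu (2 * n) | ∃ x ∈ T, ∃ y ∈ U, z = G y - F x} = 0 := by
  classical
  haveI hprodHaar : (volume : Measure ((Eu n) × (Eu n))).IsAddHaarMeasure :=
    Measure.prod.instIsAddHaarMeasure _ _
  set H : (Eu n) × (Eu n) → (Eu (2 * n)) := fun p => G p.2 - F p.1 with hHdef
  have hH : LipschitzWith (CG * 1 + CF * 1) H :=
    (hG.comp LipschitzWith.prod_snd).sub (hF.comp LipschitzWith.prod_fst)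
  have key : {z : Eu (2 * n) | ∃ x ∈ T, ∃ y ∈ U, z = G y - F x} = H '' (T ×ˢ U) := by
    ext z
    constructor
    · rintro ⟨x, hx, y, hy, rfl⟩
      exact ⟨(x, y), ⟨hx, hy⟩, rfl⟩
    · rintro ⟨⟨x, y⟩, ⟨hx, hy⟩, rfl⟩
      exact ⟨x, hx, y, hy, rfl⟩
  rw [key]
  -- pieces
  set Z : Set (Eu n) :=
    {x | x ∈ T ∧ DifferentiableAt ℝ F x ∧ Function.Injective (fderiv ℝ F x)} with hZdef
  have hZ : volume Z = 0 := inj_part_null F T hT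
  set NF : Set (Eu n) := {x | ¬ DifferentiableAt ℝ F x} with hNFdef
  set NG : Set (Eu n) := {x | ¬ DifferentiableAt ℝ G x} with hNGdef
  have hNF : volume NF = 0 := by
    have := hF.ae_differentiableAt (μ := volume)
    rwa [MeasureTheory.ae_iff] at this
  have hNG : volume NG = 0 := by
    have := hG.ae_differentiableAt (μ := volume)
    rwa [MeasureTheory.ae_iff] at this
  set W : Set (Eu n) :=
    {x | DifferentiableAt ℝ F x ∧ ¬ Function.Injective (fderiv ℝ F x)} with hWdef
  -- measurability of W
  have hInjClosed : MeasurableSet {L : (Eu n) →L[ℝ] (Eu (2 * n)) | Function.Injective L} := by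
    have heq : {L : (Eu n) →L[ℝ] (Eu (2 * n)) | Function.Injective L} =
        ⋃ m : ℕ, {L | ∀ v, (1 / (m + 1) : ℝ) * ‖v‖ ≤ ‖L v‖} := by
      ext L
      constructor
      · intro hL
        obtain ⟨K₀, K₀pos, hK₀⟩ := LinearMap.exists_antilipschitzWith
          (L : (Eu n) →ₗ[ℝ] (Eu (2 * n))) (LinearMap.ker_eq_bot.mpr hL)
        obtain ⟨m, hm⟩ := exists_nat_gt (K₀ : ℝ)
        refine mem_iUnion.2 ⟨m, fun v => ?_⟩
        have h1 := hK₀.le_mul_dist v 0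
        simp only [dist_zero_right, ContinuousLinearMap.coe_coe, map_zero, sub_zero] at h1
        have hKpos : (0 : ℝ) < K₀ := K₀pos
        have hm1 : (K₀ : ℝ) < m + 1 := lt_trans hm (by exact_mod_cast lt_add_one _)
        rw [div_mul_eq_mul_div, one_mul, div_le_iff₀ (by positivity)]
        calc ‖v‖ ≤ K₀ * ‖L v‖ := h1
          _ ≤ ‖L v‖ * (m + 1) := by nlinarith [norm_nonneg (L v)]
      · intro hL
        obtain ⟨m, hm⟩ := mem_iUnion.1 hL
        intro a b hab
        have h1 := hm (a - b)
        rw [map_sub, hab, sub_self, norm_zero] at h1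
        have hmp : (0 : ℝ) < 1 / ((m : ℝ) + 1) := by positivity
        have h2 : ‖a - b‖ ≤ 0 := by nlinarith [norm_nonneg (a - b)]
        have := le_antisymm h2 (norm_nonneg _)
        rwa [norm_sub_eq_zero_iff] at this
    rw [heq]
    apply MeasurableSet.iUnion
    intro m
    apply IsClosed.measurableSet
    have hiInter : {L : (Eu n) →L[ℝ] (Eu (2 * n)) | ∀ v, (1 / (m + 1) : ℝ) * ‖v‖ ≤ ‖L v‖} =
        ⋂ v, {L : (Eu n) →L[ℝ] (Eu (2 * n)) | (1 / (m + 1) : ℝ) * ‖v‖ ≤ ‖L v‖} := by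
      ext L; simp [mem_iInter]
    rw [hiInter]
    apply isClosed_iInter
    intro v
    apply isClosed_le
    · exact continuous_const
    · exact (ContinuousLinearMap.apply ℝ (EuclideanSpace ℝ (Fin (2 * n))) v).continuous.norm
  have hWmeas : MeasurableSet W := by
    have h1 : W = {x | DifferentiableAt ℝ F x} ∩
        (fderiv ℝ F) ⁻¹' {L | Function.Injective L}ᶜ := rfl
    rw [h1]
    exact (measurableSet_of_differentiableAt ℝ F).inter
      ((measurable_fderiv ℝ F) hInjClosed.compl)
  have hDGmeas : MeasurableSet {x : Eu n | DifferentiableAt ℝ G x} :=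
    measurableSet_of_differentiableAt ℝ G
  -- decomposition
  have hsub : T ×ˢ U ⊆ (Z ×ˢ univ) ∪ (NF ×ˢ univ) ∪ (univ ×ˢ NG) ∪
      (W ×ˢ {x | DifferentiableAt ℝ G x}) := by
    rintro ⟨x, y⟩ ⟨hx, hy⟩
    by_cases h1 : DifferentiableAt ℝ F x
    · by_cases h2 : Function.Injective (fderiv ℝ F x)
      · exact Or.inl (Or.inl (Or.inl ⟨⟨hx, h1, h2⟩, mem_univ _⟩))
      · by_cases h3 : DifferentiableAt ℝ G y
        · exact Or.inr ⟨⟨h1, h2⟩, h3⟩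
        · exact Or.inl (Or.inr ⟨mem_univ _, h3⟩)
    · exact Or.inl (Or.inl (Or.inr ⟨h1, mem_univ _⟩))
  -- null products
  have prodnull_left : ∀ s : Set (Eu n), volume s = 0 →
      (volume : Measure ((Eu n) × (Eu n))) (s ×ˢ (univ : Set (Eu n))) = 0 := by
    intro s hs
    have h1 : s ×ˢ (univ : Set (Eu n)) ⊆ (toMeasurable volume s) ×ˢ univ :=
      prod_mono (subset_toMeasurable _ _) subset_rfl
    refine measure_mono_null h1 ?_
    rw [Measure.volume_eq_prod, Measure.prod_prod, measure_toMeasurable, hs, zero_mul]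
  have prodnull_right : ∀ s : Set (Eu n), volume s = 0 →
      (volume : Measure ((Eu n) × (Eu n))) ((univ : Set (Eu n)) ×ˢ s) = 0 := by
    intro s hs
    have h1 : (univ : Set (Eu n)) ×ˢ s ⊆ univ ×ˢ (toMeasurable volume s) :=
      prod_mono subset_rfl (subset_toMeasurable _ _)
    refine measure_mono_null h1 ?_
    rw [Measure.volume_eq_prod, Measure.prod_prod, measure_toMeasurable, hs, mul_zero]
  -- the degenerate piece
  set ψ : ((Eu n) × (Eu n)) ≃L[ℝ] (Eu (2 * n)) := ContinuousLinearEquiv.ofFinrankEq frk with hψ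
  set B3 : Set ((Eu n) × (Eu n)) := W ×ˢ {x | DifferentiableAt ℝ G x} with hB3
  have hB3meas : MeasurableSet B3 := hWmeas.prod hDGmeas
  set Φ : ((Eu n) × (Eu n)) → ((Eu n) × (Eu n)) := fun p => ψ.symm (H p) with hΦ
  set Dm : ((Eu n) × (Eu n)) → (((Eu n) × (Eu n)) →L[ℝ] ((Eu n) × (Eu n))) := fun p =>
    (ψ.symm : (Eu (2 * n)) →L[ℝ] ((Eu n) × (Eu n))).comp
      (((fderiv ℝ G p.2).comp (ContinuousLinearMap.snd ℝ _ _)) -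
        ((fderiv ℝ F p.1).comp (ContinuousLinearMap.fst ℝ _ _))) with hDm
  have hderiv : ∀ p ∈ B3, HasFDerivWithinAt Φ (Dm p) B3 p := by
    rintro ⟨x, y⟩ ⟨⟨hx, -⟩, hy⟩
    have h1 : HasFDerivAt (fun p : (Eu n) × (Eu n) => G p.2)
        ((fderiv ℝ G y).comp (ContinuousLinearMap.snd ℝ _ _)) (x, y) :=
      HasFDerivAt.comp (x, y) hy.hasFDerivAt hasFDerivAt_snd
    have h2 : HasFDerivAt (fun p : (Eu n) × (Eu n) => F p.1)
        ((fderiv ℝ F x).comp (ContinuousLinearMap.fst ℝ _ _)) (x, y) :=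
      HasFDerivAt.comp (x, y) hx.hasFDerivAt hasFDerivAt_fst
    have h3 : HasFDerivAt H (((fderiv ℝ G y).comp (ContinuousLinearMap.snd ℝ _ _)) -
        ((fderiv ℝ F x).comp (ContinuousLinearMap.fst ℝ _ _))) (x, y) := h1.sub h2
    have h4 : HasFDerivAt Φ (Dm (x, y)) (x, y) :=
      HasFDerivAt.comp (x, y) (ψ.symm.toContinuousLinearMap.hasFDerivAt) h3
    exact h4.hasFDerivWithinAt
  have hdet : ∀ p ∈ B3, (Dm p).det = 0 := by
    rintro ⟨x, y⟩ ⟨⟨hx, hninj⟩, hy⟩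
    obtain ⟨a, b, hab, hne⟩ := Function.not_injective_iff.1 hninj
    set v : Eu n := a - b with hv
    have hv0 : v ≠ 0 := sub_ne_zero.2 hne
    have hLv : fderiv ℝ F x v = 0 := by
      rw [hv, map_sub, hab, sub_self]
    have hker : Dm (x, y) (v, 0) = 0 := by
      simp only [hDm, ContinuousLinearMap.coe_comp', Function.comp_apply,
        ContinuousLinearMap.sub_apply, ContinuousLinearMap.coe_snd',
        ContinuousLinearMap.coe_fst', hLv, map_zero, sub_zero]
    by_contra hdet0
    have hdet' : LinearMap.det ((Dm (x, y)) : ((Eu n) × (Eu n)) →ₗ[ℝ] ((Eu n) × (Eu n))) ≠ 0 := by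
      simpa [ContinuousLinearMap.det] using hdet0
    have hinj : Function.Injective (Dm (x, y)) := by
      have h5 := (LinearMap.equivOfDetNeZero _ hdet').injective
      have h6 : ((LinearMap.equivOfDetNeZero
            ((Dm (x, y)) : ((Eu n) × (Eu n)) →ₗ[ℝ] ((Eu n) × (Eu n))) hdet') :
            ((Eu n) × (Eu n)) →ₗ[ℝ] ((Eu n) × (Eu n))) =
          ((Dm (x, y)) : ((Eu n) × (Eu n)) →ₗ[ℝ] ((Eu n) × (Eu n))) :=
        LinearEquiv.coe_ofIsUnitDet _
      have h7 : ∀ u, (LinearMap.equivOfDetNeZero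
          ((Dm (x, y)) : ((Eu n) × (Eu n)) →ₗ[ℝ] ((Eu n) × (Eu n))) hdet') u = Dm (x, y) u := by
        intro u
        conv_rhs => rw [show (Dm (x, y)) u = ((Dm (x, y)) :
          ((Eu n) × (Eu n)) →ₗ[ℝ] ((Eu n) × (Eu n))) u from rfl, ← h6]
        rfl
      intro s t hst
      apply h5
      rw [h7, h7, hst]
    have : (v, (0 : Eu n)) = (0, 0) := by
      apply hinj
      rw [hker]
      exact (map_zero (Dm (x, y))).symm
    exact hv0 (congrArg Prod.fst this)
  have himgB3 : volume (H '' B3) = 0 := by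
    have hΦnull : volume (Φ '' B3) = 0 := by
      have hle := addHaar_image_le_lintegral_abs_det_fderiv volume hB3meas hderiv
      have hzero : ∫⁻ p in B3, ENNReal.ofReal |(Dm p).det| ∂volume = 0 := by
        have heq0 : ∫⁻ p in B3, ENNReal.ofReal |(Dm p).det| ∂volume =
            ∫⁻ _ in B3, (0 : ℝ≥0∞) ∂volume :=
          setLIntegral_congr_fun hB3meas (fun p hp => by
            rw [hdet p hp]; simp)
        rw [heq0]
        simp
      rw [hzero] at hle
      exact le_antisymm hle zero_le
    have hHcomp : H '' B3 = ψ '' (Φ '' B3) := by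
      rw [← image_comp]
      apply image_congr
      intro p hp
      simp [hΦ, Function.comp]
    rw [hHcomp]
    exact lipschitz_image_null volume volume frk ψ.lipschitz hΦnull
  -- put everything together
  have h1 : volume (H '' (Z ×ˢ univ)) = 0 :=
    lipschitz_image_null volume volume frk hH (prodnull_left _ hZ)
  have h2 : volume (H '' (NF ×ˢ univ)) = 0 :=
    lipschitz_image_null volume volume frk hH (prodnull_left _ hNF)
  have h3 : volume (H '' (univ ×ˢ NG)) = 0 :=
    lipschitz_image_null volume volume frk hH (prodnull_right _ hNG)
  have hfinal : H '' (T ×ˢ U) ⊆ (H '' (Z ×ˢ univ)) ∪ (H '' (NF ×ˢ univ)) ∪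
      (H '' (univ ×ˢ NG)) ∪ (H '' B3) := by
    rw [← image_union, ← image_union, ← image_union]
    exact image_mono hsub
  refine measure_mono_null hfinal ?_
  refine measure_union_null (measure_union_null (measure_union_null h1 h2) h3) himgB3

/-- Any Lipschitz map on a subset extends to a globally Lipschitz map with the same image
on that subset. -/
theorem lipschitz_extend {n N : ℕ} (S : Set (Eu n)) (f : S → (Eu N)) (C : ℝ≥0)
    (hf : LipschitzWith C f) :
    ∃ (F : (Eu n) → (Eu N)) (K : ℝ≥0), LipschitzWith K F ∧ Set.range f = F '' S := by
  classical
  rcases S.eq_empty_or_nonempty with rfl | ⟨x₀, hx₀⟩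
  · refine ⟨fun _ => 0, 0, LipschitzWith.const _, ?_⟩
    haveI : IsEmpty (↥(∅ : Set (Eu n))) := Set.isEmpty_coe_sort.2 rfl
    rw [Set.image_empty, Set.range_eq_empty]
  · set f' : (Eu n) → (Eu N) := fun x => if h : x ∈ S then f ⟨x, h⟩ else f ⟨x₀, hx₀⟩ with hf'
    have hf'lip : LipschitzOnWith C f' S := by
      rw [lipschitzOnWith_iff_dist_le_mul]
      intro x hx y hy
      rw [hf']
      simp only [dif_pos hx, dif_pos hy]
      have := hf.dist_le_mul ⟨x, hx⟩ ⟨y, hy⟩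
      rwa [Subtype.dist_eq] at this
    set e := EuclideanSpace.equiv (Fin N) ℝ with he
    have h1 : LipschitzOnWith (‖(e : (Eu N) →L[ℝ] (Fin N → ℝ))‖₊ * C)
        (fun x => e (f' x)) S :=
      (e : (Eu N) →L[ℝ] (Fin N → ℝ)).lipschitz.comp_lipschitzOnWith hf'lip
    obtain ⟨g, hg, hgeq⟩ := h1.extend_pi
    refine ⟨fun x => e.symm (g x), _, (e.symm : (Fin N → ℝ) →L[ℝ] (Eu N)).lipschitz.comp hg, ?_⟩
    have hagree : ∀ x (hx : x ∈ S), e.symm (g x) = f ⟨x, hx⟩ := by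
      intro x hx
      rw [← hgeq hx]
      simp only [ContinuousLinearEquiv.symm_apply_apply]
      rw [hf']
      simp [dif_pos hx]
    ext z
    constructor
    · rintro ⟨⟨x, hx⟩, rfl⟩
      exact ⟨x, hx, hagree x hx⟩
    · rintro ⟨x, hx, rfl⟩
      exact ⟨⟨x, hx⟩, (hagree x hx).symm⟩


end DisplaceAux

set_option maxHeartbeats 2000000 in
/-- **Instantaneous Hamiltonian displaceability of a critically negligible set.**
If `A ⊆ ℝ^{2n}` is countably `n`-rectifiable and `n`-negligible, then there is a vector
`v₀` such that for almost every `t ∈ ℝ` the translate `A + t • v₀` is disjoint from `A`. -/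
theorem displaceability_critically_negligible (n : ℕ)
    (A : Set (EuclideanSpace ℝ (Fin (2 * n))))
    (hA : CountablyRectifiable n A)
    (hneg : μH[(n : ℝ)] A = 0) :
    ∃ v₀ : EuclideanSpace ℝ (Fin (2 * n)),
      volume {t : ℝ | ∃ a ∈ A, a + t • v₀ ∈ A} = 0 := by
  classical
  obtain ⟨S, f, C, hLip, hAeq⟩ := hA
  have hext : ∀ i, ∃ (F : (Eu n) → (Eu (2 * n))) (K : ℝ≥0),
      LipschitzWith K F ∧ Set.range (f i) = F '' (S i) :=
    fun i => DisplaceAux.lipschitz_extend (S i) (f i) (C i) (hLip i)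
  choose Fs Ks hKs hFs using hext
  have hAeq2 : A = ⋃ i, Fs i '' (S i) := by
    rw [hAeq]
    exact iUnion_congr hFs
  have hnull : ∀ i, μH[(n : ℝ)] (Fs i '' (S i)) = 0 := by
    intro i
    refine le_antisymm (le_trans (measure_mono ?_) hneg.le) zero_le
    rw [hAeq2]
    exact subset_iUnion (fun i => Fs i '' (S i)) i
  set Dset : Set (Eu (2 * n)) := {z | ∃ a ∈ A, ∃ b ∈ A, z = b - a} with hDset
  have hD : volume Dset = 0 := by
    have hcup : Dset ⊆ ⋃ p : ℕ × ℕ,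
        {z : Eu (2 * n) | ∃ x ∈ S p.1, ∃ y ∈ S p.2, z = Fs p.2 y - Fs p.1 x} := by
      rintro z ⟨a, ha, b, hb, rfl⟩
      rw [hAeq2] at ha hb
      obtain ⟨i, hia⟩ := mem_iUnion.1 ha
      obtain ⟨j, hjb⟩ := mem_iUnion.1 hb
      obtain ⟨x, hx, rfl⟩ := hia
      obtain ⟨y, hy, rfl⟩ := hjb
      exact mem_iUnion.2 ⟨(i, j), ⟨x, hx, y, hy, rfl⟩⟩
    refine measure_mono_null hcup (measure_iUnion_null ?_)
    rintro ⟨i, j⟩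
    exact DisplaceAux.diff_image_null (Fs i) (Fs j) (hKs i) (hKs j) (S i) (S j) (hnull i)
  set D' := toMeasurable volume Dset with hD'def
  have hD'null : volume D' = 0 := by rw [hD'def, measure_toMeasurable]; exact hD
  have hD'meas : MeasurableSet D' := measurableSet_toMeasurable _ _
  -- Fubini
  have hsmul_cont : Continuous (fun p : ℝ × (Eu (2 * n)) => p.1 • p.2) :=
    continuous_fst.smul continuous_snd
  have hswapmeas : MeasurableSet {p : ℝ × (Eu (2 * n)) | p.1 • p.2 ∈ D'} :=
    hD'meas.preimage hsmul_cont.measurable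
  have hnull2 : (volume : Measure (ℝ × (Eu (2 * n)))) {p | p.1 • p.2 ∈ D'} = 0 := by
    rw [Measure.volume_eq_prod, Measure.measure_prod_null hswapmeas]
    have hae : ∀ᵐ t : ℝ, t ≠ 0 := by
      rw [MeasureTheory.ae_iff]
      simp only [ne_eq, not_not]
      have : {t : ℝ | t = 0} = {(0 : ℝ)} := by ext; simp
      rw [this]
      exact measure_singleton 0
    filter_upwards [hae] with t ht
    show volume (Prod.mk t ⁻¹' {p : ℝ × (Eu (2 * n)) | p.1 • p.2 ∈ D'}) = 0
    have hpre : Prod.mk t ⁻¹' {p : ℝ × (Eu (2 * n)) | p.1 • p.2 ∈ D'} =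
        (fun v : Eu (2 * n) => t • v) ⁻¹' D' := rfl
    rw [hpre]
    have hsm : (fun v : Eu (2 * n) => t • v) ⁻¹' D' = t⁻¹ • D' := by
      have := preimage_smul_inv₀ (inv_ne_zero ht) D'
      rwa [inv_inv] at this
    rw [hsm, Measure.addHaar_smul]
    rw [hD'null, mul_zero]
  have hnull3 : (volume : Measure ((Eu (2 * n)) × ℝ)) {p | p.2 • p.1 ∈ D'} = 0 := by
    have hpre : {p : (Eu (2 * n)) × ℝ | p.2 • p.1 ∈ D'} =
        Prod.swap ⁻¹' {p : ℝ × (Eu (2 * n)) | p.1 • p.2 ∈ D'} := rfl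
    rw [hpre, Measure.volume_eq_prod]
    rw [Measure.measurePreserving_swap.measure_preimage]
    · rw [← Measure.volume_eq_prod]
      exact hnull2
    · exact hswapmeas.nullMeasurableSet
  have hBmeas : MeasurableSet {p : (Eu (2 * n)) × ℝ | p.2 • p.1 ∈ D'} :=
    hD'meas.preimage (continuous_snd.smul continuous_fst).measurable
  rw [Measure.volume_eq_prod, Measure.measure_prod_null hBmeas] at hnull3
  have hvolne : (volume : Measure (Eu (2 * n))) ≠ 0 :=
    fun h => (isOpen_univ.measure_ne_zero volume univ_nonempty) (by rw [h]; rfl)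
  haveI : (ae (volume : Measure (Eu (2 * n)))).NeBot := ae_neBot.mpr hvolne
  obtain ⟨v₀, hv₀⟩ := hnull3.exists
  refine ⟨v₀, ?_⟩
  have hsubset : {t : ℝ | ∃ a ∈ A, a + t • v₀ ∈ A} ⊆
      {t : ℝ | t • v₀ ∈ D'} := by
    rintro t ⟨a, ha, hb⟩
    have : t • v₀ ∈ Dset := ⟨a, ha, a + t • v₀, hb, by abel⟩
    exact subset_toMeasurable _ _ this
  refine measure_mono_null hsubset ?_
  have : {t : ℝ | t • v₀ ∈ D'} = Prod.mk v₀ ⁻¹' {p : (Eu (2 * n)) × ℝ | p.2 • p.1 ∈ D'} := rfl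
  rw [this]
  simpa using hv₀
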